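/- Let R be a finite-dimensional commutative associative unital ℂ-algebra generated as a unital ℂ-algebra by elements s₁, …, sₙ all of which are nilpotent. Then the ℂ-linear span of the set {exp(a₁s₁ + ⋯ + aₙsₙ) : (a₁,…,aₙ) ∈ ℂⁿ} is all of R. -/

import Mathlib

open Finset

noncomputable def expS {R : Type*} [CommRing R] [Algebra ℂ R] (x : R) (N : ℕ) : R :=
  ∑ k ∈ range N, (k.factorial : ℂ)⁻¹ • x ^ k

lemma expS_trunc {R : Type*} [CommRing R] [Algebra ℂ R] (x : R) {N M : ℕ}
    (hx : x ^ N = 0) (h : N ≤ M) : expS x M = expS x N := by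
  unfold expS
  refine (Finset.sum_subset (by simpa using h) fun k _ hk => ?_).symm
  rw [pow_eq_zero_of_le (by simpa using hk) hx, smul_zero]

lemma inv_fact_eq (j k : ℕ) (h : j ≤ k) :
    ((k.factorial : ℂ))⁻¹ * (k.choose j : ℂ) =
      (j.factorial : ℂ)⁻¹ * ((k - j).factorial : ℂ)⁻¹ := by
  have := Nat.choose_mul_factorial_mul_factorial h
  have h2 : (k.choose j : ℂ) * (j.factorial : ℂ) * ((k - j).factorial : ℂ) = (k.factorial : ℂ) := by
    exact_mod_cast congrArg (Nat.cast : ℕ → ℂ) this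
  have hk : (k.factorial : ℂ) ≠ 0 := Nat.cast_ne_zero.2 k.factorial_ne_zero
  have hj : (j.factorial : ℂ) ≠ 0 := Nat.cast_ne_zero.2 j.factorial_ne_zero
  have hkj : ((k - j).factorial : ℂ) ≠ 0 := Nat.cast_ne_zero.2 (k - j).factorial_ne_zero
  field_simp
  linear_combination h2

lemma expS_mul {R : Type*} [CommRing R] [Algebra ℂ R] (x y : R) (N : ℕ)
    (hx : x ^ N = 0) (hy : y ^ N = 0) :
    expS x N * expS y N = expS (x + y) (2 * N) := by
  set g : ℕ × ℕ → R := fun p =>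
    ((p.1.factorial : ℂ)⁻¹ * (p.2.factorial : ℂ)⁻¹) • (x ^ p.1 * y ^ p.2) with hg
  have hgz : ∀ p : ℕ × ℕ, N ≤ p.1 ∨ N ≤ p.2 → g p = 0 := by
    rintro ⟨j, l⟩ (h | h) <;> simp only [hg]
    · rw [pow_eq_zero_of_le h hx, zero_mul, smul_zero]
    · rw [pow_eq_zero_of_le h hy, mul_zero, smul_zero]
  have hL : expS x N * expS y N = ∑ p ∈ range N ×ˢ range N, g p := by
    rw [expS, expS, Finset.sum_mul_sum, Finset.sum_product]
    refine Finset.sum_congr rfl fun j _ => Finset.sum_congr rfl fun l _ => ?_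
    rw [smul_mul_smul_comm]
  have hR : expS (x + y) (2 * N) =
      ∑ k ∈ range (2 * N), ∑ j ∈ range (k + 1), g (j, k - j) := by
    unfold expS
    refine Finset.sum_congr rfl fun k _ => ?_
    rw [add_pow, Finset.smul_sum]
    refine Finset.sum_congr rfl fun j hj => ?_
    have hjk : j ≤ k := Nat.lt_succ_iff.mp (Finset.mem_range.mp hj)
    have : x ^ j * y ^ (k - j) * (k.choose j : R) = (k.choose j : ℕ) • (x ^ j * y ^ (k - j)) := by
      rw [nsmul_eq_mul, mul_comm]
    rw [this, ← Nat.cast_smul_eq_nsmul ℂ, smul_smul, inv_fact_eq j k hjk]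
  have h1 : ∑ k ∈ range (2 * N), ∑ j ∈ range (k + 1), g (j, k - j)
      = ∑ p ∈ (range (2 * N) ×ˢ range (2 * N)).filter (fun p => p.1 + p.2 < 2 * N), g p := by
    rw [Finset.sum_sigma']
    refine Finset.sum_nbij' (fun x => (x.2, x.1 - x.2)) (fun p => ⟨p.1 + p.2, p.1⟩)
      ?_ ?_ ?_ ?_ ?_
    · rintro ⟨k, j⟩ hk
      simp only [Finset.mem_sigma, Finset.mem_range, Finset.mem_filter, Finset.mem_product] at *
      omega
    · rintro ⟨j, l⟩ hp
      simp only [Finset.mem_sigma, Finset.mem_range, Finset.mem_filter, Finset.mem_product] at *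
      omega
    · rintro ⟨k, j⟩ hk
      simp only [Finset.mem_sigma, Finset.mem_range] at hk
      have hjk : j + (k - j) = k := by omega
      simp [hjk]
    · rintro ⟨j, l⟩ _
      simp
    · rintro ⟨k, j⟩ _
      rfl
  have h2 : ∀ M : ℕ, N ≤ M →
      (∑ p ∈ range M ×ˢ range M, g p) = ∑ p ∈ range N ×ˢ range N, g p := by
    intro M hM
    refine (Finset.sum_subset ?_ ?_).symm
    · exact Finset.product_subset_product (by simpa using hM) (by simpa using hM)
    · rintro ⟨j, l⟩ _ hp
      simp only [Finset.mem_product, Finset.mem_range] at hp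
      exact hgz (j, l) (by omega)
  have h3 : ∑ p ∈ (range (2 * N) ×ˢ range (2 * N)).filter (fun p => p.1 + p.2 < 2 * N), g p
      = ∑ p ∈ range (2 * N) ×ˢ range (2 * N), g p := by
    refine Finset.sum_filter_of_ne ?_
    rintro ⟨j, l⟩ hp hne
    by_contra hc
    simp only [Finset.mem_product, Finset.mem_range] at hp
    exact hne (hgz (j, l) (by omega))
  rw [hL, hR, h1, h3, h2 (2 * N) (by omega)]

lemma addpow_zero {R : Type*} [CommRing R] (x y : R) (N : ℕ)
    (hx : x ^ N = 0) (hy : y ^ N = 0) : (x + y) ^ (2 * N) = 0 := by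
  rw [add_pow]
  refine Finset.sum_eq_zero fun j hj => ?_
  rw [Finset.mem_range] at hj
  rcases le_or_gt N j with h | h
  · rw [pow_eq_zero_of_le h hx, zero_mul, zero_mul]
  · rw [pow_eq_zero_of_le (by omega) hy, mul_zero, zero_mul]


lemma mem_span_of_coeff {R : Type*} [AddCommGroup R] [Module ℂ R] (S : Submodule ℂ R)
    {N : ℕ} (v : Fin N → R) (h : ∀ t : ℂ, (∑ l : Fin N, t ^ (l : ℕ) • v l) ∈ S) :
    ∀ k, v k ∈ S := by
  intro k
  set W : Matrix (Fin N) (Fin N) ℂ := Matrix.vandermonde (fun i => ((i : ℕ) : ℂ)) with hWdef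
  have hdet : IsUnit W.det := by
    rw [hWdef, Matrix.det_vandermonde]
    rw [isUnit_iff_ne_zero]
    refine Finset.prod_ne_zero_iff.2 fun i _ => Finset.prod_ne_zero_iff.2 fun j hj => ?_
    have hij' : i < j := Finset.mem_Ioi.mp hj
    have hij : (i : ℕ) < (j : ℕ) := hij'
    refine sub_ne_zero.2 fun hc => ?_
    exact absurd (Nat.cast_injective hc) (by omega)
  have hinv : W⁻¹ * W = 1 := Matrix.nonsing_inv_mul W hdet
  have key : v k = ∑ j : Fin N, W⁻¹ k j • ∑ l : Fin N, ((j : ℕ) : ℂ) ^ (l : ℕ) • v l := by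
    simp_rw [Finset.smul_sum, smul_smul]
    rw [Finset.sum_comm]
    have hWl : ∀ l : Fin N, (∑ j : Fin N, (W⁻¹ k j * ((j : ℕ) : ℂ) ^ (l : ℕ)) • v l)
        = ((W⁻¹ * W) k l) • v l := by
      intro l
      rw [Matrix.mul_apply, Finset.sum_smul]
      simp only [hWdef, Matrix.vandermonde_apply]
    simp_rw [hWl, hinv, Matrix.one_apply]
    simp
  rw [key]
  exact Submodule.sum_mem _ fun j _ => S.smul_mem _ (h _)

theorem stmt19 (R : Type) [CommRing R] [Algebra ℂ R] [FiniteDimensional ℂ R]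
    (n : ℕ) (s : Fin n → R) (hnil : ∀ i, IsNilpotent (s i))
    (hgen : Algebra.adjoin ℂ (Set.range s) = ⊤) :
    Submodule.span ℂ {u : R | ∃ a : Fin n → ℂ, ∃ N : ℕ,
      (∑ i, a i • s i) ^ N = 0 ∧
      u = ∑ k ∈ range N, (k.factorial : ℂ)⁻¹ • (∑ i, a i • s i) ^ k} = ⊤ := by
  set E : Set R := {u : R | ∃ a : Fin n → ℂ, ∃ N : ℕ,
      (∑ i, a i • s i) ^ N = 0 ∧
      u = ∑ k ∈ range N, (k.factorial : ℂ)⁻¹ • (∑ i, a i • s i) ^ k} with hE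
  have hEmem : ∀ u : R, u ∈ E ↔ ∃ a : Fin n → ℂ, ∃ N : ℕ,
      (∑ i, a i • s i) ^ N = 0 ∧ u = expS (∑ i, a i • s i) N := fun u => Iff.rfl
  -- E is closed under multiplication
  have hmulE : ∀ u ∈ E, ∀ w ∈ E, u * w ∈ E := by
    intro u hu w hw
    obtain ⟨a, N₁, ha, rfl⟩ := (hEmem u).mp hu
    obtain ⟨b, N₂, hb, rfl⟩ := (hEmem w).mp hw
    set x := ∑ i, a i • s i
    set y := ∑ i, b i • s i
    set M := max N₁ N₂ with hM
    have hxM : x ^ M = 0 := pow_eq_zero_of_le (le_max_left _ _) ha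
    have hyM : y ^ M = 0 := pow_eq_zero_of_le (le_max_right _ _) hb
    have hxy : (∑ i, (a i + b i) • s i) = x + y := by
      rw [← Finset.sum_add_distrib]
      exact Finset.sum_congr rfl fun i _ => add_smul _ _ _
    refine (hEmem _).mpr ⟨fun i => a i + b i, 2 * M, ?_, ?_⟩
    · rw [hxy]; exact addpow_zero x y M hxM hyM
    · rw [hxy, ← expS_mul x y M hxM hyM,
        expS_trunc x ha (le_max_left _ _), expS_trunc y hb (le_max_right _ _)]
  -- 1 ∈ E
  have h1E : (1 : R) ∈ E := by
    refine (hEmem _).mpr ⟨0, 1, by simp, ?_⟩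
    simp [expS]
  set S := Submodule.span ℂ E with hS
  have h1S : (1 : R) ∈ S := Submodule.subset_span h1E
  have hmulS : ∀ x y : R, x ∈ S → y ∈ S → x * y ∈ S := by
    intro x y hx hy
    have h2 : x * y ∈ S * S := Submodule.mul_mem_mul hx hy
    rw [hS, Submodule.span_mul_span] at h2
    refine Submodule.span_le.mpr ?_ h2
    intro z hz
    rw [Set.mem_mul] at hz
    obtain ⟨u, hu, w, hw, rfl⟩ := hz
    exact Submodule.subset_span (hmulE u hu w hw)
  -- each s i ∈ S
  have hsi : ∀ i, s i ∈ S := by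
    intro i
    obtain ⟨m, hm⟩ := hnil i
    set N := m + 2 with hN
    have hsN : s i ^ N = 0 := pow_eq_zero_of_le (by omega) hm
    set v : Fin N → R := fun k => (((k : ℕ).factorial : ℂ))⁻¹ • s i ^ (k : ℕ) with hv
    have hvmem : ∀ t : ℂ, (∑ l : Fin N, t ^ (l : ℕ) • v l) ∈ S := by
      intro t
      apply Submodule.subset_span
      have hsum : (∑ j, (if j = i then t else 0) • s j) = t • s i := by
        rw [Finset.sum_eq_single i]
        · simp
        · intro j _ hji; simp [hji]
        · simp
      refine (hEmem _).mpr ⟨fun j => if j = i then t else 0, N, ?_, ?_⟩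
      · rw [hsum, smul_pow, hsN, smul_zero]
      · rw [hsum, expS]
        rw [Fin.sum_univ_eq_sum_range (fun k => t ^ k • ((k.factorial : ℂ)⁻¹ • s i ^ k))]
        refine (Finset.sum_congr rfl fun k _ => ?_).symm
        rw [smul_pow, smul_comm, smul_smul]
    have := mem_span_of_coeff S v hvmem ⟨1, by omega⟩
    simpa [hv, Nat.mod_eq_of_lt (show 1 < N by omega)] using this
  -- conclude via subalgebra
  let T := S.toSubalgebra h1S hmulS
  have hT : (⊤ : Subalgebra ℂ R) ≤ T := by
    rw [← hgen]
    refine Algebra.adjoin_le ?_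
    rintro r ⟨i, rfl⟩
    exact hsi i
  have hTeq : T = ⊤ := top_unique hT
  have := congrArg Subalgebra.toSubmodule hTeq
  rw [Submodule.toSubalgebra_toSubmodule, Algebra.top_toSubmodule] at this
  exact this
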